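/- Let 1 < p < ∞ and 0 < s < 1. Let E ⊂ X be a nonempty set, z ∈ E, and 0 < r < R < diam(E) (or 0 < r < R < diam(X) if diam(E) = 0). Define the Lipschitz function u : X → ℝ by u(x) = min{1, 4 r^{−1} dist(x,E)}. Then there exists a constant C > 0, independent of z, r and R, such that ∫_{B(z,R)} ∫_{B(z,R)} |u(x)−u(y)|^p / (d(x,y)^{sp} μ(B(x,d(x,y)))) dμ(y) dμ(x) ≤ C r^{−sp} μ(E_r ∩ B(z,R)). -/

import Mathlib

open Metric MeasureTheory Set
open scoped ENNReal NNReal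

set_option linter.unusedSectionVars false
set_option linter.unusedVariables false

section Aux
variable {X : Type*} [MetricSpace X] [MeasurableSpace X] [BorelSpace X]

lemma isOpen_measure_ball_gt (μ : Measure X) (c : ℝ≥0∞) :
    IsOpen {q : X × ℝ | c < μ (ball q.1 q.2)} := by
  rw [Metric.isOpen_iff]
  rintro ⟨x, t⟩ hq
  simp only [mem_setOf_eq] at hq
  have ht : 0 < t := by
    by_contra h
    push_neg at h
    rw [ball_eq_empty.2 h] at hq
    simp at hq
  have hcover : ball x t = ⋃ n : ℕ, ball x (t - t / (n + 2)) := by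
    ext w
    simp only [mem_ball, mem_iUnion]
    constructor
    · intro hw
      have hpos : 0 < t - dist w x := by linarith
      obtain ⟨n, hn⟩ := exists_nat_gt (t / (t - dist w x))
      refine ⟨n, ?_⟩
      have h2 : t / (t - dist w x) < (n : ℝ) + 2 := by
        have : (n : ℝ) ≤ n + 2 := by linarith
        linarith
      have : t / ((n : ℝ) + 2) < t - dist w x := by
        rw [div_lt_iff₀ (by positivity)] at h2 ⊢
        nlinarith
      linarith
    · rintro ⟨n, hn⟩
      have : 0 < t / ((n:ℝ) + 2) := by positivity
      linarith
  have hmono : Monotone fun n : ℕ => ball x (t - t / (n + 2)) := by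
    intro m n hmn
    apply ball_subset_ball
    have : t / ((n:ℝ) + 2) ≤ t / ((m:ℝ) + 2) := by
      apply div_le_div_of_nonneg_left ht.le (by positivity)
      have : (m:ℝ) ≤ (n:ℝ) := Nat.cast_le.2 hmn
      linarith
    linarith
  rw [hcover, (hmono.directed_le).measure_iUnion] at hq
  rw [lt_iSup_iff] at hq
  obtain ⟨n, hn⟩ := hq
  obtain ⟨t', htt', hn⟩ : ∃ t', t' < t ∧ c < μ (ball x t') := by
    refine ⟨t - t / ((n:ℝ) + 2), ?_, hn⟩
    have : 0 < t / ((n:ℝ) + 2) := by positivity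
    linarith
  have hpos2 : 0 < (t - t') / 2 := by linarith
  refine ⟨(t - t') / 2, hpos2, ?_⟩
  rintro ⟨x₁, t₁⟩ hq₁
  rw [mem_ball, Prod.dist_eq, max_lt_iff] at hq₁
  obtain ⟨hd1, hd2⟩ := hq₁
  simp only [mem_setOf_eq]
  show c < μ (ball x₁ t₁)
  refine lt_of_lt_of_le hn (measure_mono ?_)
  intro w hw
  rw [mem_ball] at hw ⊢
  have hd2' : |t₁ - t| < (t - t') / 2 := by
    simpa [Real.dist_eq] using hd2
  have h1 : dist x₁ x < (t - t') / 2 := hd1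
  have h3 : dist w x₁ ≤ dist w x + dist x₁ x := by
    rw [dist_comm x₁ x]; exact dist_triangle _ _ _
  have h4 := abs_lt.1 hd2'
  linarith [h4.1, h4.2]

lemma measurable_measure_ball_prod (μ : Measure X) :
    Measurable fun q : X × ℝ => μ (ball q.1 q.2) := by
  apply measurable_of_Ioi
  intro c
  exact (isOpen_measure_ball_gt μ c).measurableSet


lemma doubling_pow (μ : Measure X) (c_μ : ℝ)
    (hdoubling : ∀ (x : X) (ρ : ℝ), 0 < ρ →
      μ (ball x (2 * ρ)) ≤ ENNReal.ofReal c_μ * μ (ball x ρ)) :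
    ∀ (k : ℕ) (a : X) (t : ℝ), 0 < t →
      μ (ball a (2 ^ k * t)) ≤ (ENNReal.ofReal c_μ) ^ k * μ (ball a t) := by
  intro k
  induction k with
  | zero => intro a t ht; simp
  | succ k ih =>
    intro a t ht
    have h1 : (2:ℝ) ^ (k+1) * t = 2 * (2 ^ k * t) := by ring
    rw [h1]
    calc μ (ball a (2 * (2 ^ k * t))) ≤ ENNReal.ofReal c_μ * μ (ball a (2 ^ k * t)) :=
          hdoubling a _ (by positivity)
      _ ≤ ENNReal.ofReal c_μ * ((ENNReal.ofReal c_μ) ^ k * μ (ball a t)) := by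
          exact mul_le_mul_right (ih a t ht) _
      _ = (ENNReal.ofReal c_μ) ^ (k+1) * μ (ball a t) := by ring

lemma totallyBounded_ball_of_doubling (μ : Measure X) (c_μ : ℝ) (hc : 1 < c_μ)
    (hball : ∀ (x : X) (ρ : ℝ), 0 < ρ → 0 < μ (ball x ρ) ∧ μ (ball x ρ) < ⊤)
    (hdoubling : ∀ (x : X) (ρ : ℝ), 0 < ρ →
      μ (ball x (2 * ρ)) ≤ ENNReal.ofReal c_μ * μ (ball x ρ))
    (x₀ : X) (R : ℝ) : TotallyBounded (ball x₀ R) := by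
  rcases le_or_gt R 0 with hR | hR
  · rw [ball_eq_empty.2 hR]; exact totallyBounded_empty
  rw [Metric.totallyBounded_iff]
  by_contra hcon
  push_neg at hcon
  obtain ⟨ε, hε, hcon⟩ := hcon
  classical
  -- build an ε-separated sequence
  have H : ∀ t : Finset X, ∃ x, x ∈ ball x₀ R ∧ ∀ y ∈ t, ε ≤ dist x y := by
    intro t
    obtain ⟨x, hx, hx2⟩ := not_subset.1 (hcon (t : Set X) t.finite_toSet)
    refine ⟨x, hx, fun y hy => ?_⟩
    by_contra hlt
    push_neg at hlt
    exact hx2 (mem_biUnion hy (mem_ball.2 (by rwa [dist_comm] at hlt ⊢)))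
  choose f hf1 hf2 using H
  let v : ℕ → Finset X := fun n => Nat.rec ∅ (fun _ t => insert (f t) t) n
  have hv : ∀ n, v (n+1) = insert (f (v n)) (v n) := fun n => rfl
  have hvmono : ∀ m n, m ≤ n → v m ⊆ v n := by
    intro m n hmn
    induction n with
    | zero => simp_all
    | succ n ih =>
      rcases Nat.lt_or_ge m (n+1) with h | h
      · exact (ih (Nat.lt_succ_iff.1 h)).trans (by rw [hv]; exact Finset.subset_insert _ _)
      · have : m = n + 1 := le_antisymm hmn h
        subst this; rfl
  set u : ℕ → X := fun n => f (v n) with hu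
  have humem : ∀ m n, m < n → u m ∈ v n := by
    intro m n hmn
    have : u m ∈ v (m+1) := by rw [hv]; exact Finset.mem_insert_self _ _
    exact hvmono (m+1) n hmn this
  have hsep : ∀ m n, m < n → ε ≤ dist (u n) (u m) := fun m n hmn =>
    hf2 (v n) (u m) (humem m n hmn)
  have hsep' : ∀ m n, m ≠ n → ε ≤ dist (u n) (u m) := by
    intro m n hmn
    rcases hmn.lt_or_gt with h | h
    · exact hsep m n h
    · rw [dist_comm]; exact hsep n m h
  have humemball : ∀ n, u n ∈ ball x₀ R := fun n => hf1 (v n)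
  -- disjoint balls
  have hdisj : ∀ m n, m ≠ n → Disjoint (ball (u m) (ε/2)) (ball (u n) (ε/2)) := by
    intro m n hmn
    rw [Set.disjoint_left]
    intro w hwm hwn
    rw [mem_ball] at hwm hwn
    have h4 : ε ≤ dist (u n) (u m) := hsep' m n hmn
    have h3 : dist (u n) (u m) ≤ dist w (u n) + dist w (u m) := dist_triangle_left _ _ _
    linarith
  -- lower bound for the measure of the small balls
  obtain ⟨k, hk⟩ := pow_unbounded_of_one_lt (4 * R / ε) one_lt_two
  have hk2 : 2 * R ≤ 2 ^ k * (ε / 2) := by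
    rw [div_lt_iff₀ hε] at hk
    nlinarith
  have hlow : ∀ n, μ (ball x₀ R) ≤ (ENNReal.ofReal c_μ) ^ k * μ (ball (u n) (ε/2)) := by
    intro n
    have h1 : ball x₀ R ⊆ ball (u n) (2 * R) := by
      intro w hw
      rw [mem_ball] at hw ⊢
      have := humemball n
      rw [mem_ball] at this
      calc dist w (u n) ≤ dist w x₀ + dist x₀ (u n) := dist_triangle _ _ _
        _ < R + R := by rw [dist_comm x₀ (u n)]; linarith
        _ = 2 * R := by ring
    calc μ (ball x₀ R) ≤ μ (ball (u n) (2 * R)) := measure_mono h1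
      _ ≤ μ (ball (u n) (2 ^ k * (ε/2))) := measure_mono (ball_subset_ball hk2)
      _ ≤ (ENNReal.ofReal c_μ) ^ k * μ (ball (u n) (ε/2)) :=
          doubling_pow μ c_μ hdoubling k _ _ (by positivity)
  -- sum of disjoint balls
  set b := μ (ball x₀ R) with hb
  set K := (ENNReal.ofReal c_μ) ^ k with hK
  set M := μ (ball x₀ (R + ε/2)) with hM
  have hKtop : K ≠ ⊤ := by
    rw [hK]; exact (ENNReal.pow_lt_top (n := k) ENNReal.ofReal_lt_top).ne
  have hMtop : M < ⊤ := (hball x₀ (R + ε/2) (by linarith)).2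
  have hb0 : 0 < b := (hball x₀ R hR).1
  have hbtop : b ≠ ⊤ := ((hball x₀ R hR).2).ne
  have hsum : ∀ N : ℕ, (N : ℝ≥0∞) * b ≤ K * M := by
    intro N
    have hdisj2 : (↑(Finset.range N) : Set ℕ).PairwiseDisjoint (fun n => ball (u n) (ε/2)) :=
      fun m _ n _ hmn => hdisj m n hmn
    have hmeas : ∀ n ∈ Finset.range N, MeasurableSet (ball (u n) (ε/2)) :=
      fun n _ => measurableSet_ball
    have h5 : ∑ n ∈ Finset.range N, μ (ball (u n) (ε/2)) = μ (⋃ n ∈ Finset.range N, ball (u n) (ε/2)) :=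
      (measure_biUnion_finset hdisj2 hmeas).symm
    have h6 : μ (⋃ n ∈ Finset.range N, ball (u n) (ε/2)) ≤ M := by
      apply measure_mono
      intro w hw
      simp only [mem_iUnion] at hw
      obtain ⟨n, _, hw⟩ := hw
      rw [mem_ball] at hw ⊢
      have := humemball n
      rw [mem_ball] at this
      calc dist w x₀ ≤ dist w (u n) + dist (u n) x₀ := dist_triangle _ _ _
        _ < ε/2 + R := by linarith
        _ = R + ε/2 := by ring
    have h7 : (N : ℝ≥0∞) * b = ∑ _n ∈ Finset.range N, b := by
      rw [Finset.sum_const, Finset.card_range, nsmul_eq_mul]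
    rw [h7]
    calc ∑ _n ∈ Finset.range N, b ≤ ∑ n ∈ Finset.range N, K * μ (ball (u n) (ε/2)) :=
          Finset.sum_le_sum (fun n _ => hlow n)
      _ = K * ∑ n ∈ Finset.range N, μ (ball (u n) (ε/2)) := by rw [Finset.mul_sum]
      _ ≤ K * M := by rw [h5]; exact mul_le_mul_right h6 _
  -- contradiction
  have hfin : K * M / b ≠ ⊤ := by
    apply (ENNReal.div_lt_top (ENNReal.mul_ne_top hKtop hMtop.ne) hb0.ne').ne
  obtain ⟨N, hN⟩ := ENNReal.exists_nat_gt hfin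
  have := hsum N
  rw [← ENNReal.le_div_iff_mul_le (Or.inl hb0.ne') (Or.inl hbtop)] at this
  exact absurd this (not_le.2 hN)

lemma secondCountable_of_doubling (μ : Measure X) (c_μ : ℝ) (hc : 1 < c_μ)
    (hball : ∀ (x : X) (ρ : ℝ), 0 < ρ → 0 < μ (ball x ρ) ∧ μ (ball x ρ) < ⊤)
    (hdoubling : ∀ (x : X) (ρ : ℝ), 0 < ρ →
      μ (ball x (2 * ρ)) ≤ ENNReal.ofReal c_μ * μ (ball x ρ))
    (x₀ : X) : SecondCountableTopology X := by
  have hsep : TopologicalSpace.IsSeparable (Set.univ : Set X) := by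
    have : (Set.univ : Set X) ⊆ ⋃ n : ℕ, ball x₀ (n : ℝ) := by
      intro x _
      obtain ⟨n, hn⟩ := exists_nat_gt (dist x x₀)
      exact mem_iUnion.2 ⟨n, mem_ball.2 hn⟩
    exact (TopologicalSpace.IsSeparable.iUnion (fun n : ℕ =>
      (totallyBounded_ball_of_doubling μ c_μ hc hball hdoubling x₀ (n : ℝ)).isSeparable)).mono this
  have : TopologicalSpace.SeparableSpace X := TopologicalSpace.isSeparable_univ_iff.1 hsep
  exact UniformSpace.secondCountable_of_separable X


lemma tsum_geom_ofReal (K ρ : ℝ) (hK : 0 ≤ K) (hρ0 : 0 ≤ ρ) (hρ1 : ρ < 1) :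
    ∑' j : ℕ, ENNReal.ofReal (K * ρ ^ j) ≤ ENNReal.ofReal (K / (1 - ρ)) := by
  have h1 : ∀ j : ℕ, ENNReal.ofReal (K * ρ ^ j) = ENNReal.ofReal K * (ENNReal.ofReal ρ) ^ j := by
    intro j; rw [ENNReal.ofReal_mul hK, ENNReal.ofReal_pow hρ0]
  simp_rw [h1]
  rw [ENNReal.tsum_mul_left, ENNReal.tsum_geometric, div_eq_mul_inv, ENNReal.ofReal_mul hK]
  apply mul_le_mul_right
  rw [ENNReal.ofReal_inv_of_pos (by linarith), ENNReal.ofReal_sub _ hρ0, ENNReal.ofReal_one]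

lemma annulus_estimate (μ : Measure X) (c_μ : ℝ) (hc : 0 ≤ c_μ)
    (hball : ∀ (x : X) (ρ : ℝ), 0 < ρ → 0 < μ (ball x ρ) ∧ μ (ball x ρ) < ⊤)
    (hdoubling : ∀ (x : X) (ρ : ℝ), 0 < ρ →
      μ (ball x (2 * ρ)) ≤ ENNReal.ofReal c_μ * μ (ball x ρ))
    (sp N t : ℝ) (hsp : 0 < sp) (ht : 0 < t) (hN : 0 ≤ N)
    (a : X) (g : X → ℝ≥0∞)
    (hg : ∀ y, t ≤ dist a y → dist a y < 2 * t →
      g y ≤ ENNReal.ofReal N / (ENNReal.ofReal (t ^ sp) * μ (ball a t))) :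
    ∫⁻ y in {y | t ≤ dist a y ∧ dist a y < 2 * t}, g y ∂μ ≤
      ENNReal.ofReal (c_μ * (N / t ^ sp)) := by
  have hA : MeasurableSet {y | t ≤ dist a y ∧ dist a y < 2 * t} := by
    have : {y | t ≤ dist a y ∧ dist a y < 2 * t} = (fun y => dist a y) ⁻¹' (Ico t (2*t)) := rfl
    rw [this]
    exact (continuous_const.dist continuous_id).measurable measurableSet_Ico
  have hm := hball a t ht
  have hm0 : μ (ball a t) ≠ 0 := hm.1.ne'
  have hmtop : μ (ball a t) ≠ ⊤ := hm.2.ne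
  have htsp : (0:ℝ) < t ^ sp := Real.rpow_pos_of_pos ht sp
  calc ∫⁻ y in {y | t ≤ dist a y ∧ dist a y < 2 * t}, g y ∂μ
      ≤ ∫⁻ _ in {y | t ≤ dist a y ∧ dist a y < 2 * t},
          (ENNReal.ofReal N / (ENNReal.ofReal (t ^ sp) * μ (ball a t))) ∂μ :=
        setLIntegral_mono' hA (fun y hy => hg y hy.1 hy.2)
    _ = (ENNReal.ofReal N / (ENNReal.ofReal (t ^ sp) * μ (ball a t))) *
          μ {y | t ≤ dist a y ∧ dist a y < 2 * t} := setLIntegral_const _ _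
    _ ≤ (ENNReal.ofReal N / (ENNReal.ofReal (t ^ sp) * μ (ball a t))) *
          (ENNReal.ofReal c_μ * μ (ball a t)) := by
        apply mul_le_mul_right
        refine le_trans (measure_mono ?_) (hdoubling a t ht)
        intro y hy
        rw [mem_ball, dist_comm]
        exact hy.2
    _ = ENNReal.ofReal c_μ *
          (ENNReal.ofReal N * μ (ball a t) / (ENNReal.ofReal (t ^ sp) * μ (ball a t))) := by
        rw [div_eq_mul_inv, div_eq_mul_inv]; ring
    _ = ENNReal.ofReal c_μ * (ENNReal.ofReal N / ENNReal.ofReal (t ^ sp)) := by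
        rw [ENNReal.mul_div_mul_right _ _ hm0 hmtop]
    _ = ENNReal.ofReal (c_μ * (N / t ^ sp)) := by
        rw [← ENNReal.ofReal_div_of_pos htsp, ← ENNReal.ofReal_mul hc]

lemma exists_near_index (r d : ℝ) (hr : 0 < r) (hd0 : 0 < d) (hdr : d < r) :
    ∃ j : ℕ, r * 2 ^ (-(j:ℝ) - 1) ≤ d ∧ d < r * 2 ^ (-(j:ℝ)) := by
  classical
  have hex : ∃ n : ℕ, r * 2 ^ (-(n:ℝ) - 1) ≤ d := by
    obtain ⟨n, hn⟩ := pow_unbounded_of_one_lt (r / d) one_lt_two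
    have hn' : r < 2 ^ n * d := by
      rw [div_lt_iff₀ hd0] at hn; linarith
    refine ⟨n, ?_⟩
    have h2 : (2:ℝ) ^ (-(n:ℝ) - 1) = ((2:ℝ) ^ n * 2)⁻¹ := by
      rw [show -(n:ℝ) - 1 = -((n:ℝ) + 1) by ring, Real.rpow_neg (by norm_num),
        Real.rpow_add (by norm_num), Real.rpow_one, Real.rpow_natCast]
    rw [h2, ← div_eq_mul_inv, div_le_iff₀ (by positivity)]
    nlinarith [pow_pos (show (0:ℝ) < 2 by norm_num) n, hd0.le]
  refine ⟨Nat.find hex, Nat.find_spec hex, ?_⟩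
  rcases Nat.eq_zero_or_pos (Nat.find hex) with h0 | hpos
  · rw [h0]
    simpa using hdr
  · obtain ⟨k, hk⟩ := Nat.exists_eq_succ_of_ne_zero hpos.ne'
    have hnot := Nat.find_min hex (m := k) (by omega)
    push_neg at hnot
    rw [hk]
    have : -((k+1:ℕ):ℝ) = -(k:ℝ) - 1 := by push_cast; ring
    rw [this]
    exact hnot

lemma exists_far_index (r d : ℝ) (hr : 0 < r) (hrd : r ≤ d) :
    ∃ j : ℕ, r * 2 ^ (j:ℝ) ≤ d ∧ d < 2 * (r * 2 ^ (j:ℝ)) := by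
  classical
  have hex : ∃ n : ℕ, d < 2 * (r * 2 ^ (n:ℝ)) := by
    obtain ⟨n, hn⟩ := pow_unbounded_of_one_lt (d / r) one_lt_two
    rw [div_lt_iff₀ hr] at hn
    refine ⟨n, ?_⟩
    rw [Real.rpow_natCast]
    nlinarith [pow_pos (show (0:ℝ) < 2 by norm_num) n]
  refine ⟨Nat.find hex, ?_, Nat.find_spec hex⟩
  rcases Nat.eq_zero_or_pos (Nat.find hex) with h0 | hpos
  · rw [h0]
    simpa using hrd
  · obtain ⟨k, hk⟩ := Nat.exists_eq_succ_of_ne_zero hpos.ne'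
    have hnot := Nat.find_min hex (m := k) (by omega)
    push_neg at hnot
    rw [hk]
    have : ((k+1:ℕ):ℝ) = (k:ℝ) + 1 := by push_cast; ring
    rw [this, Real.rpow_add (by norm_num), Real.rpow_one]
    calc r * (2 ^ (k:ℝ) * 2) = 2 * (r * 2 ^ (k:ℝ)) := by ring
      _ ≤ d := hnot

lemma key_integral (μ : Measure X) (c_μ : ℝ) (hc : 1 < c_μ)
    (hball : ∀ (x : X) (ρ : ℝ), 0 < ρ → 0 < μ (ball x ρ) ∧ μ (ball x ρ) < ⊤)
    (hdoubling : ∀ (x : X) (ρ : ℝ), 0 < ρ →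
      μ (ball x (2 * ρ)) ≤ ENNReal.ofReal c_μ * μ (ball x ρ))
    (p s : ℝ) (hp : 1 < p) (hs0 : 0 < s) (hs1 : s < 1)
    (a : X) (r : ℝ) (hr : 0 < r) :
    ∫⁻ y, ENNReal.ofReal (min 1 (4 * r⁻¹ * dist a y) ^ p) /
        (ENNReal.ofReal (dist a y ^ (s * p)) * μ (ball a (dist a y))) ∂μ ≤
      ENNReal.ofReal ((c_μ * ((4:ℝ) ^ p * (2:ℝ) ^ (s * p) / (1 - (2:ℝ) ^ (-(p * (1 - s)))) +
        1 / (1 - (2:ℝ) ^ (-(s * p))))) * r ^ (-(s * p))) := by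
  have h2 : (0:ℝ) < 2 := two_pos
  have hp0 : (0:ℝ) < p := lt_trans one_pos hp
  have hsp : (0:ℝ) < s * p := mul_pos hs0 hp0
  have hq : (0:ℝ) < p * (1 - s) := mul_pos hp0 (by linarith)
  have hc0 : (0:ℝ) ≤ c_μ := by linarith
  set g : X → ℝ≥0∞ := fun y => ENNReal.ofReal (min 1 (4 * r⁻¹ * dist a y) ^ p) /
      (ENNReal.ofReal (dist a y ^ (s * p)) * μ (ball a (dist a y))) with hg
  -- numerator is nonnegative and bounded
  have hmin_nonneg : ∀ y : X, 0 ≤ min 1 (4 * r⁻¹ * dist a y) :=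
    fun y => le_min zero_le_one (by positivity)
  -- covering sets
  set S0 : Set X := {y | dist a y ≤ 0} with hS0def
  set Anear : ℕ → Set X := fun j =>
    {y | r * 2 ^ (-(j:ℝ) - 1) ≤ dist a y ∧ dist a y < 2 * (r * 2 ^ (-(j:ℝ) - 1))} with hAneardef
  set Afar : ℕ → Set X := fun j =>
    {y | r * 2 ^ (j:ℝ) ≤ dist a y ∧ dist a y < 2 * (r * 2 ^ (j:ℝ))} with hAfardef
  have hdub : ∀ x : ℝ, 2 * (r * (2:ℝ) ^ (x - 1)) = r * 2 ^ x := by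
    intro x; rw [Real.rpow_sub h2, Real.rpow_one]; ring
  have hcover : (univ : Set X) ⊆ S0 ∪ ((⋃ j, Anear j) ∪ (⋃ j, Afar j)) := by
    intro y _
    rcases le_or_gt (dist a y) 0 with h | h
    · exact Or.inl h
    rcases lt_or_ge (dist a y) r with h' | h'
    · obtain ⟨j, hj1, hj2⟩ := exists_near_index r (dist a y) hr h h'
      refine Or.inr (Or.inl (mem_iUnion.2 ⟨j, hj1, ?_⟩))
      rw [hdub (-(j:ℝ))] at *
      exact hj2
    · obtain ⟨j, hj1, hj2⟩ := exists_far_index r (dist a y) hr h'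
      exact Or.inr (Or.inr (mem_iUnion.2 ⟨j, hj1, hj2⟩))
  -- zero part
  have hS0meas : MeasurableSet S0 := by
    have : S0 = (fun y => dist a y) ⁻¹' (Iic 0) := rfl
    rw [this]
    exact (continuous_const.dist continuous_id).measurable measurableSet_Iic
  have hS0 : ∫⁻ y in S0, g y ∂μ ≤ 0 := by
    have hz : ∀ y ∈ S0, g y ≤ 0 := by
      intro y hy
      have hd0 : dist a y = 0 := le_antisymm hy dist_nonneg
      rw [hg]
      simp only [hd0, mul_zero]
      rw [min_eq_right zero_le_one, Real.zero_rpow hp0.ne', ENNReal.ofReal_zero,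
        ENNReal.zero_div]
    calc ∫⁻ y in S0, g y ∂μ ≤ ∫⁻ _ in S0, 0 ∂μ := setLIntegral_mono' hS0meas hz
      _ = 0 := by simp
  -- near part
  have hnear : ∀ j : ℕ, ∫⁻ y in Anear j, g y ∂μ ≤
      ENNReal.ofReal ((c_μ * ((4:ℝ) ^ p * (2:ℝ) ^ (s * p)) * r ^ (-(s * p))) *
        ((2:ℝ) ^ (-(p * (1 - s)))) ^ j) := by
    intro j
    have htj : (0:ℝ) < r * 2 ^ (-(j:ℝ) - 1) := by positivity
    have hNj : (0:ℝ) ≤ (4 * (2:ℝ) ^ (-(j:ℝ))) ^ p := Real.rpow_nonneg (by positivity) _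
    have hstep := annulus_estimate μ c_μ hc0 hball hdoubling (s*p) ((4 * (2:ℝ) ^ (-(j:ℝ))) ^ p)
      (r * 2 ^ (-(j:ℝ) - 1)) hsp htj hNj a g ?_
    · refine hstep.trans (le_of_eq ?_)
      congr 1
      -- real algebra
      have e1 : ((4:ℝ) * 2 ^ (-(j:ℝ))) ^ p = 4 ^ p * 2 ^ (-(j:ℝ) * p) := by
        rw [Real.mul_rpow (by norm_num) (Real.rpow_nonneg h2.le _), ← Real.rpow_mul h2.le]
      have e2 : (r * (2:ℝ) ^ (-(j:ℝ) - 1)) ^ (s*p) = r ^ (s*p) * 2 ^ ((-(j:ℝ) - 1) * (s*p)) := by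
        rw [Real.mul_rpow hr.le (Real.rpow_nonneg h2.le _), ← Real.rpow_mul h2.le]
      have e3 : ((2:ℝ) ^ (-(p * (1 - s)))) ^ j = (2:ℝ) ^ (-(p * (1 - s)) * (j:ℝ)) := by
        rw [← Real.rpow_natCast ((2:ℝ) ^ (-(p * (1 - s)))) j, ← Real.rpow_mul h2.le]
      have hsplit : (2:ℝ) ^ (-(j:ℝ) * p) =
          2 ^ ((-(j:ℝ) - 1) * (s*p)) * (2 ^ (s*p) * 2 ^ (-(p * (1 - s)) * (j:ℝ))) := by
        rw [← Real.rpow_add h2, ← Real.rpow_add h2]; congr 1; ring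
      rw [e1, e2, e3, hsplit, Real.rpow_neg hr.le]
      have h3 : (r:ℝ) ^ (s*p) ≠ 0 := (Real.rpow_pos_of_pos hr _).ne'
      have h4 : (2:ℝ) ^ ((-(j:ℝ) - 1) * (s*p)) ≠ 0 := (Real.rpow_pos_of_pos h2 _).ne'
      field_simp
    · -- pointwise bound on the annulus
      intro y hy1 hy2
      rw [hg]
      have hup : 2 * (r * (2:ℝ) ^ (-(j:ℝ) - 1)) = r * 2 ^ (-(j:ℝ)) := hdub _
      apply ENNReal.div_le_div
      · apply ENNReal.ofReal_le_ofReal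
        apply Real.rpow_le_rpow (hmin_nonneg y) _ hp0.le
        refine le_trans (min_le_right _ _) ?_
        rw [hup] at hy2
        calc 4 * r⁻¹ * dist a y ≤ 4 * r⁻¹ * (r * 2 ^ (-(j:ℝ))) := by
              apply mul_le_mul_of_nonneg_left hy2.le (by positivity)
          _ = 4 * 2 ^ (-(j:ℝ)) := by field_simp
      · exact mul_le_mul' (ENNReal.ofReal_le_ofReal
          (Real.rpow_le_rpow htj.le hy1 hsp.le))
          (measure_mono (ball_subset_ball hy1))
  -- far part
  have hfar : ∀ j : ℕ, ∫⁻ y in Afar j, g y ∂μ ≤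
      ENNReal.ofReal ((c_μ * r ^ (-(s * p))) * ((2:ℝ) ^ (-(s * p))) ^ j) := by
    intro j
    have htj : (0:ℝ) < r * 2 ^ ((j:ℝ)) := by positivity
    have hstep := annulus_estimate μ c_μ hc0 hball hdoubling (s*p) 1
      (r * 2 ^ ((j:ℝ))) hsp htj zero_le_one a g ?_
    · refine hstep.trans (le_of_eq ?_)
      congr 1
      have e2 : (r * (2:ℝ) ^ ((j:ℝ))) ^ (s*p) = r ^ (s*p) * 2 ^ ((j:ℝ) * (s*p)) := by
        rw [Real.mul_rpow hr.le (Real.rpow_nonneg h2.le _), ← Real.rpow_mul h2.le]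
      have e3 : ((2:ℝ) ^ (-(s*p))) ^ j = (2:ℝ) ^ (-(s*p) * (j:ℝ)) := by
        rw [← Real.rpow_natCast ((2:ℝ) ^ (-(s*p))) j, ← Real.rpow_mul h2.le]
      have hsplit : ((2:ℝ) ^ ((j:ℝ) * (s*p)))⁻¹ = (2:ℝ) ^ (-(s*p) * (j:ℝ)) := by
        rw [← Real.rpow_neg h2.le]; congr 1; ring
      rw [e2, e3, ← hsplit, Real.rpow_neg hr.le]
      have h3 : (r:ℝ) ^ (s*p) ≠ 0 := (Real.rpow_pos_of_pos hr _).ne'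
      have h4 : (2:ℝ) ^ ((j:ℝ) * (s*p)) ≠ 0 := (Real.rpow_pos_of_pos h2 _).ne'
      field_simp
    · intro y hy1 hy2
      rw [hg]
      apply ENNReal.div_le_div
      · exact ENNReal.ofReal_le_ofReal
          (Real.rpow_le_one (hmin_nonneg y) (min_le_left _ _) hp0.le)
      · exact mul_le_mul' (ENNReal.ofReal_le_ofReal
          (Real.rpow_le_rpow htj.le hy1 hsp.le))
          (measure_mono (ball_subset_ball hy1))
  -- geometric sums
  have hρ2lt : (2:ℝ) ^ (-(p * (1 - s))) < 1 :=
    Real.rpow_lt_one_of_one_lt_of_neg one_lt_two (by linarith)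
  have hρ1lt : (2:ℝ) ^ (-(s * p)) < 1 :=
    Real.rpow_lt_one_of_one_lt_of_neg one_lt_two (by linarith)
  have hρ2nonneg : (0:ℝ) ≤ (2:ℝ) ^ (-(p * (1 - s))) := Real.rpow_nonneg h2.le _
  have hρ1nonneg : (0:ℝ) ≤ (2:ℝ) ^ (-(s * p)) := Real.rpow_nonneg h2.le _
  have hK1 : (0:ℝ) ≤ c_μ * ((4:ℝ) ^ p * (2:ℝ) ^ (s * p)) * r ^ (-(s * p)) := by positivity
  have hK2 : (0:ℝ) ≤ c_μ * r ^ (-(s * p)) := by positivity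
  have hsumnear : ∫⁻ y in ⋃ j, Anear j, g y ∂μ ≤
      ENNReal.ofReal ((c_μ * ((4:ℝ) ^ p * (2:ℝ) ^ (s * p)) * r ^ (-(s * p))) /
        (1 - (2:ℝ) ^ (-(p * (1 - s))))) := by
    refine le_trans (lintegral_iUnion_le _ _) ?_
    refine le_trans (ENNReal.tsum_le_tsum hnear) ?_
    exact tsum_geom_ofReal _ _ hK1 hρ2nonneg hρ2lt
  have hsumfar : ∫⁻ y in ⋃ j, Afar j, g y ∂μ ≤
      ENNReal.ofReal ((c_μ * r ^ (-(s * p))) / (1 - (2:ℝ) ^ (-(s * p)))) := by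
    refine le_trans (lintegral_iUnion_le _ _) ?_
    refine le_trans (ENNReal.tsum_le_tsum hfar) ?_
    exact tsum_geom_ofReal _ _ hK2 hρ1nonneg hρ1lt
  calc ∫⁻ y, g y ∂μ = ∫⁻ y in univ, g y ∂μ := (setLIntegral_univ g).symm
    _ ≤ ∫⁻ y in S0 ∪ ((⋃ j, Anear j) ∪ (⋃ j, Afar j)), g y ∂μ := lintegral_mono_set hcover
    _ ≤ ∫⁻ y in S0, g y ∂μ + ∫⁻ y in (⋃ j, Anear j) ∪ (⋃ j, Afar j), g y ∂μ :=
        lintegral_union_le _ _ _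
    _ ≤ ∫⁻ y in S0, g y ∂μ + (∫⁻ y in ⋃ j, Anear j, g y ∂μ + ∫⁻ y in ⋃ j, Afar j, g y ∂μ) :=
        add_le_add_right (lintegral_union_le _ _ _) _
    _ ≤ 0 + (ENNReal.ofReal ((c_μ * ((4:ℝ) ^ p * (2:ℝ) ^ (s * p)) * r ^ (-(s * p))) /
          (1 - (2:ℝ) ^ (-(p * (1 - s))))) +
        ENNReal.ofReal ((c_μ * r ^ (-(s * p))) / (1 - (2:ℝ) ^ (-(s * p))))) := by
        exact add_le_add hS0 (add_le_add hsumnear hsumfar)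
    _ ≤ ENNReal.ofReal ((c_μ * ((4:ℝ) ^ p * (2:ℝ) ^ (s * p) / (1 - (2:ℝ) ^ (-(p * (1 - s)))) +
        1 / (1 - (2:ℝ) ^ (-(s * p))))) * r ^ (-(s * p))) := by
        have hd2 : (1:ℝ) - (2:ℝ) ^ (-(p * (1 - s))) > 0 := by linarith
        have hd1 : (1:ℝ) - (2:ℝ) ^ (-(s * p)) > 0 := by linarith
        rw [zero_add, ← ENNReal.ofReal_add (div_nonneg hK1 hd2.le) (div_nonneg hK2 hd1.le)]
        apply ENNReal.ofReal_le_ofReal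
        apply le_of_eq
        field_simp

lemma abs_min_one_sub_le (a b : ℝ) : |min 1 a - min 1 b| ≤ |a - b| := by
  have h1 : a - b ≤ |a - b| := le_abs_self _
  have h2 : b - a ≤ |a - b| := by rw [abs_sub_comm]; exact le_abs_self _
  have h3 : (0:ℝ) ≤ |a - b| := abs_nonneg _
  rw [abs_sub_le_iff]
  constructor <;> (simp only [min_def]; split_ifs <;> linarith)

lemma ennreal_div_inv_mul (k D N : ℝ≥0∞) (k0 : k ≠ 0) (ktop : k ≠ ⊤) :
    N / (k⁻¹ * D) = k * (N / D) := by
  rw [div_eq_mul_inv, div_eq_mul_inv,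
    ENNReal.mul_inv (Or.inl (ENNReal.inv_ne_zero.2 ktop)) (Or.inl (ENNReal.inv_ne_top.2 k0)),
    inv_inv]
  ring

end Aux

/-- The effective diameter bound: `diam E`, unless `diam E = 0`, in which case `diam X`. -/
noncomputable def diamBound {X : Type*} [PseudoEMetricSpace X] (E : Set X) : ℝ≥0∞ :=
  haveI := Classical.propDecidable
  if EMetric.diam E = 0 then EMetric.diam (Set.univ : Set X) else EMetric.diam E

/-- The fractional `(s,p)`-Gagliardo kernel `|u x - u y|^p / (d(x,y)^{sp} μ(B(x,d(x,y))))`. -/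
noncomputable def fracKernel {X : Type*} [MetricSpace X] [MeasurableSpace X]
    (μ : Measure X) (s p : ℝ) (u : X → ℝ) (x y : X) : ℝ≥0∞ :=
  ENNReal.ofReal (|u x - u y| ^ p) /
    (ENNReal.ofReal (dist x y ^ (s * p)) * μ (ball x (dist x y)))

/-- Energy estimate for the test function `u(x) = min{1, 4 r⁻¹ dist(x,E)}`: the Gagliardo
`(s,p)`-energy of `u` over `B(z,R)` is bounded by `C r^{-sp} μ(E_r ∩ B(z,R))`, with `C`
independent of `z`, `r` and `R`. -/
theorem test_function_energy_estimate {X : Type*} [MetricSpace X] [MeasurableSpace X]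
    [BorelSpace X] [Nontrivial X]
    (μ : Measure X) (c_μ : ℝ) (hc : 1 < c_μ)
    (hball : ∀ (x : X) (ρ : ℝ), 0 < ρ → 0 < μ (ball x ρ) ∧ μ (ball x ρ) < ⊤)
    (hdoubling : ∀ (x : X) (ρ : ℝ), 0 < ρ →
      μ (ball x (2 * ρ)) ≤ ENNReal.ofReal c_μ * μ (ball x ρ))
    (p s : ℝ) (hp : 1 < p) (hs0 : 0 < s) (hs1 : s < 1)
    (E : Set X) (hE : E.Nonempty) :
    ∃ C : ℝ, 0 < C ∧
      ∀ z ∈ E, ∀ r R : ℝ, 0 < r → r < R → ENNReal.ofReal R < diamBound E →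
        (∫⁻ x in ball z R, ∫⁻ y in ball z R,
            fracKernel μ s p (fun w => min 1 (4 * r⁻¹ * infDist w E)) x y ∂μ ∂μ) ≤
          ENNReal.ofReal (C * r ^ (-(s * p))) * μ ({x | infDist x E < r} ∩ ball z R) := by
  have h2 : (0:ℝ) < 2 := two_pos
  have hp0 : (0:ℝ) < p := lt_trans one_pos hp
  have hsp : (0:ℝ) < s * p := mul_pos hs0 hp0
  have hq : (0:ℝ) < p * (1 - s) := mul_pos hp0 (by linarith)
  have hc0 : (0:ℝ) < c_μ := by linarith
  have hρ2lt : (2:ℝ) ^ (-(p * (1 - s))) < 1 :=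
    Real.rpow_lt_one_of_one_lt_of_neg one_lt_two (by linarith)
  have hρ1lt : (2:ℝ) ^ (-(s * p)) < 1 :=
    Real.rpow_lt_one_of_one_lt_of_neg one_lt_two (by linarith)
  have hρ2nonneg : (0:ℝ) ≤ (2:ℝ) ^ (-(p * (1 - s))) := Real.rpow_nonneg h2.le _
  have hρ1nonneg : (0:ℝ) ≤ (2:ℝ) ^ (-(s * p)) := Real.rpow_nonneg h2.le _
  haveI hSC : SecondCountableTopology X :=
    secondCountable_of_doubling μ c_μ hc hball hdoubling hE.some
  have hC₀pos : 0 < c_μ * ((4:ℝ) ^ p * (2:ℝ) ^ (s * p) / (1 - (2:ℝ) ^ (-(p * (1 - s)))) +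
      1 / (1 - (2:ℝ) ^ (-(s * p)))) := by
    have h1 : (0:ℝ) < (4:ℝ) ^ p := Real.rpow_pos_of_pos (by norm_num) _
    have h2' : (0:ℝ) < (2:ℝ) ^ (s * p) := Real.rpow_pos_of_pos h2 _
    have h3 : (0:ℝ) < 1 - (2:ℝ) ^ (-(p * (1 - s))) := by linarith
    have h4 : (0:ℝ) < 1 - (2:ℝ) ^ (-(s * p)) := by linarith
    positivity
  refine ⟨(1 + c_μ) * (c_μ * ((4:ℝ) ^ p * (2:ℝ) ^ (s * p) / (1 - (2:ℝ) ^ (-(p * (1 - s)))) +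
      1 / (1 - (2:ℝ) ^ (-(s * p))))), by positivity, ?_⟩
  intro z hz r R hr hrR hRdiam
  have hR : 0 < R := lt_trans hr hrR
  set u : X → ℝ := fun w => min 1 (4 * r⁻¹ * infDist w E) with hu
  set C₀ : ℝ := c_μ * ((4:ℝ) ^ p * (2:ℝ) ^ (s * p) / (1 - (2:ℝ) ^ (-(p * (1 - s)))) +
      1 / (1 - (2:ℝ) ^ (-(s * p)))) with hC₀
  set κ : ℝ≥0∞ := ENNReal.ofReal (C₀ * r ^ (-(s * p))) with hκ
  set k : ℝ≥0∞ := ENNReal.ofReal c_μ with hk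
  have hk0 : k ≠ 0 := (ENNReal.ofReal_pos.2 hc0).ne'
  have hktop : k ≠ ⊤ := ENNReal.ofReal_ne_top
  -- pointwise bounds on u
  have hu0 : ∀ w, 0 ≤ u w := fun w => le_min zero_le_one (mul_nonneg (by positivity) infDist_nonneg)
  have hu1 : ∀ w, u w ≤ 1 := fun w => min_le_left _ _
  have hud : ∀ x y : X, |u x - u y| ≤ min 1 (4 * r⁻¹ * dist x y) := by
    intro x y
    refine le_min ?_ ?_
    · have := hu0 x; have := hu0 y; have := hu1 x; have := hu1 y
      rw [abs_le]; constructor <;> linarith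
    · refine le_trans (abs_min_one_sub_le _ _) ?_
      have hinf : |infDist x E - infDist y E| ≤ dist x y := by
        rw [abs_sub_le_iff]
        constructor
        · have := infDist_le_infDist_add_dist (x := x) (y := y) (s := E); linarith
        · have := infDist_le_infDist_add_dist (x := y) (y := x) (s := E)
          rw [dist_comm y x] at this; linarith
      calc |4 * r⁻¹ * infDist x E - 4 * r⁻¹ * infDist y E|
          = 4 * r⁻¹ * |infDist x E - infDist y E| := by
            rw [← mul_sub, abs_mul, abs_of_nonneg (by positivity : (0:ℝ) ≤ 4 * r⁻¹)]
        _ ≤ 4 * r⁻¹ * dist x y := by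
            apply mul_le_mul_of_nonneg_left hinf (by positivity)
  have hnum : ∀ x y : X, ENNReal.ofReal (|u x - u y| ^ p) ≤
      ENNReal.ofReal (min 1 (4 * r⁻¹ * dist x y) ^ p) := fun x y =>
    ENNReal.ofReal_le_ofReal (Real.rpow_le_rpow (abs_nonneg _) (hud x y) hp0.le)
  have hker_le : ∀ x y : X, fracKernel μ s p u x y ≤
      ENNReal.ofReal (min 1 (4 * r⁻¹ * dist x y) ^ p) /
        (ENNReal.ofReal (dist x y ^ (s * p)) * μ (ball x (dist x y))) := fun x y =>
    ENNReal.div_le_div (hnum x y) le_rfl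
  -- vanishing away from E_r
  have huone : ∀ x : X, r ≤ infDist x E → u x = 1 := by
    intro x hx
    apply min_eq_left
    have : 4 * r⁻¹ * r ≤ 4 * r⁻¹ * infDist x E :=
      mul_le_mul_of_nonneg_left hx (by positivity)
    have h4 : 4 * r⁻¹ * r = 4 := by field_simp
    linarith
  have hvanish : ∀ x y : X, r ≤ infDist x E → r ≤ infDist y E →
      fracKernel μ s p u x y = 0 := by
    intro x y hx hy
    rw [fracKernel]
    rw [show u x = 1 from huone x hx, show u y = 1 from huone y hy]
    simp [Real.zero_rpow hp0.ne']
  -- symmetrized bound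
  have hsym : ∀ x y : X, fracKernel μ s p u x y ≤
      k * (ENNReal.ofReal (min 1 (4 * r⁻¹ * dist y x) ^ p) /
        (ENNReal.ofReal (dist y x ^ (s * p)) * μ (ball y (dist y x)))) := by
    intro x y
    by_cases hxy : x = y
    · subst hxy
      rw [fracKernel]
      simp [Real.zero_rpow hp0.ne']
    · have hd : 0 < dist x y := dist_pos.2 hxy
      rw [dist_comm y x]
      have hmm : μ (ball y (dist x y)) ≤ k * μ (ball x (dist x y)) := by
        refine le_trans (measure_mono ?_) (hdoubling x (dist x y) hd)
        intro w hw
        rw [mem_ball] at hw ⊢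
        calc dist w x ≤ dist w y + dist y x := dist_triangle _ _ _
          _ < dist x y + dist x y := by rw [dist_comm y x] at *; linarith
          _ = 2 * dist x y := by ring
      have h1 : k⁻¹ * μ (ball y (dist x y)) ≤ μ (ball x (dist x y)) := by
        calc k⁻¹ * μ (ball y (dist x y)) ≤ k⁻¹ * (k * μ (ball x (dist x y))) :=
              mul_le_mul_right hmm _
          _ = μ (ball x (dist x y)) := by
              rw [← mul_assoc, ENNReal.inv_mul_cancel hk0 hktop, one_mul]
      calc fracKernel μ s p u x y
          ≤ ENNReal.ofReal (min 1 (4 * r⁻¹ * dist x y) ^ p) /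
            (ENNReal.ofReal (dist x y ^ (s * p)) * μ (ball x (dist x y))) := hker_le x y
        _ ≤ ENNReal.ofReal (min 1 (4 * r⁻¹ * dist x y) ^ p) /
            (ENNReal.ofReal (dist x y ^ (s * p)) * (k⁻¹ * μ (ball y (dist x y)))) :=
            ENNReal.div_le_div_left (mul_le_mul_right h1 _) _
        _ = ENNReal.ofReal (min 1 (4 * r⁻¹ * dist x y) ^ p) /
            (k⁻¹ * (ENNReal.ofReal (dist x y ^ (s * p)) * μ (ball y (dist x y)))) := by
            congr 1
            ring
        _ = k * (ENNReal.ofReal (min 1 (4 * r⁻¹ * dist x y) ^ p) /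
            (ENNReal.ofReal (dist x y ^ (s * p)) * μ (ball y (dist x y)))) :=
            ennreal_div_inv_mul _ _ _ hk0 hktop
  -- measurability
  have hu_cont : Continuous u :=
    continuous_const.min (continuous_const.mul (continuous_infDist_pt E))
  have hFmeas : Measurable (fun q : X × X => fracKernel μ s p u q.1 q.2) := by
    apply Measurable.div
    · apply ENNReal.measurable_ofReal.comp
      exact ((Real.continuous_rpow_const hp0.le).comp
        ((hu_cont.comp continuous_fst).sub (hu_cont.comp continuous_snd)).abs).measurable
    · apply Measurable.mul
      · apply ENNReal.measurable_ofReal.comp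
        exact ((Real.continuous_rpow_const hsp.le).comp continuous_dist).measurable
      · exact (measurable_measure_ball_prod μ).comp
          (measurable_fst.prodMk continuous_dist.measurable)
  -- finite restricted measure
  haveI hfin : IsFiniteMeasure (μ.restrict (ball z R)) :=
    ⟨by rw [Measure.restrict_apply_univ]; exact (hball z R hR).2⟩
  have hGmeas : MeasurableSet {x : X | infDist x E < r} :=
    (continuous_infDist_pt E).measurable measurableSet_Iio
  set ν : Measure X := μ.restrict (ball z R) with hν
  set G : Set X := {x : X | infDist x E < r} with hG
  -- inner integral bounds
  have hinner1 : ∀ x : X, ∫⁻ y in ball z R, fracKernel μ s p u x y ∂μ ≤ κ := by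
    intro x
    refine le_trans (setLIntegral_le_lintegral _ _) ?_
    refine le_trans (lintegral_mono (fun y => hker_le x y)) ?_
    exact key_integral μ c_μ hc hball hdoubling p s hp hs0 hs1 x r hr
  have hinner2 : ∀ y : X, ∫⁻ x in ball z R, fracKernel μ s p u x y ∂μ ≤ k * κ := by
    intro y
    refine le_trans (setLIntegral_le_lintegral _ _) ?_
    refine le_trans (lintegral_mono (fun x => hsym x y)) ?_
    rw [lintegral_const_mul' k _ hktop]
    exact mul_le_mul_right (key_integral μ c_μ hc hball hdoubling p s hp hs0 hs1 y r hr) _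
  -- product splitting
  set Sset : Set (X × X) := (G ×ˢ (univ : Set X)) ∪ ((univ : Set X) ×ˢ G) with hSset
  have hSmeas : MeasurableSet Sset :=
    (hGmeas.prod MeasurableSet.univ).union (MeasurableSet.univ.prod hGmeas)
  have hcompl : ∀ q : X × X, q ∈ Ssetᶜ → fracKernel μ s p u q.1 q.2 = 0 := by
    intro q hq
    simp only [hSset, compl_union, mem_inter_iff, mem_compl_iff, mem_prod, mem_univ,
      and_true, true_and, hG, mem_setOf_eq, not_lt] at hq
    exact hvanish q.1 q.2 hq.1 hq.2
  have step1 : (∫⁻ x in ball z R, ∫⁻ y in ball z R, fracKernel μ s p u x y ∂μ ∂μ) =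
      ∫⁻ q, fracKernel μ s p u q.1 q.2 ∂(ν.prod ν) :=
    (lintegral_prod _ hFmeas.aemeasurable).symm
  have step2 : (∫⁻ q, fracKernel μ s p u q.1 q.2 ∂(ν.prod ν)) ≤
      (∫⁻ q in G ×ˢ (univ : Set X), fracKernel μ s p u q.1 q.2 ∂(ν.prod ν)) +
      (∫⁻ q in (univ : Set X) ×ˢ G, fracKernel μ s p u q.1 q.2 ∂(ν.prod ν)) := by
    rw [← lintegral_add_compl (fun q : X × X => fracKernel μ s p u q.1 q.2) hSmeas]
    have hz2 : ∫⁻ q in Ssetᶜ, fracKernel μ s p u q.1 q.2 ∂(ν.prod ν) = 0 := by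
      refine le_antisymm ?_ zero_le
      refine le_trans (setLIntegral_mono' hSmeas.compl
        (fun q hq => (hcompl q hq).le)) ?_
      simp
    rw [hz2, add_zero]
    exact lintegral_union_le _ _ _
  have hterm1 : (∫⁻ q in G ×ˢ (univ : Set X), fracKernel μ s p u q.1 q.2 ∂(ν.prod ν)) ≤
      κ * μ (G ∩ ball z R) := by
    have e1 : (ν.prod ν).restrict (G ×ˢ (univ : Set X)) = (ν.restrict G).prod ν := by
      rw [← Measure.prod_restrict, Measure.restrict_univ]
    rw [e1, lintegral_prod _ hFmeas.aemeasurable]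
    have e2 : ν.restrict G = μ.restrict (G ∩ ball z R) := Measure.restrict_restrict hGmeas
    rw [e2]
    refine le_trans (lintegral_mono (fun x => hinner1 x)) ?_
    rw [lintegral_const, Measure.restrict_apply_univ]
  have hterm2 : (∫⁻ q in (univ : Set X) ×ˢ G, fracKernel μ s p u q.1 q.2 ∂(ν.prod ν)) ≤
      (k * κ) * μ (G ∩ ball z R) := by
    have e1 : (ν.prod ν).restrict ((univ : Set X) ×ˢ G) = ν.prod (ν.restrict G) := by
      rw [← Measure.prod_restrict, Measure.restrict_univ]
    rw [e1, lintegral_prod_symm _ hFmeas.aemeasurable]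
    have e2 : ν.restrict G = μ.restrict (G ∩ ball z R) := Measure.restrict_restrict hGmeas
    rw [e2]
    refine le_trans (lintegral_mono (fun y => hinner2 y)) ?_
    rw [lintegral_const, Measure.restrict_apply_univ]
  calc (∫⁻ x in ball z R, ∫⁻ y in ball z R, fracKernel μ s p u x y ∂μ ∂μ)
      ≤ κ * μ (G ∩ ball z R) + (k * κ) * μ (G ∩ ball z R) := by
        rw [step1]; exact le_trans step2 (add_le_add hterm1 hterm2)
    _ = ((1 + k) * κ) * μ (G ∩ ball z R) := by ring
    _ = ENNReal.ofReal ((1 + c_μ) * C₀ * r ^ (-(s * p))) * μ (G ∩ ball z R) := by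
        congr 1
        rw [hκ, hk, ← ENNReal.ofReal_one, ← ENNReal.ofReal_add zero_le_one hc0.le,
          ← ENNReal.ofReal_mul (by linarith)]
        congr 1
        ring
  -- done
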